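/- For every positive integer a with a > 1, the sum over 1 ≤ l ≤ a of the sum of partial quotients of the continued fraction expansion of l/a is O(a · (log a)^2); precisely, there is an absolute constant C such that ∑_{l=1}^{a} s₁(l/a) ≤ C · a · (log a)^2 for all a ≥ 2, where s₁(l/a) denotes the sum of the partial quotients in the continued fraction expansion [0; a₁,…,a_s] of l/a. -/

import Mathlib

/-- Sum of partial quotients of the continued fraction expansion of `l/a`
(for `0 < l ≤ a`): `s1 l a = ⌊a/l⌋ + s1 (a % l) l`. -/
def contFracPartialQuotientSum : ℕ → ℕ → ℕ
  | 0, _ => 0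
  | (l+1), a => a / (l+1) + contFracPartialQuotientSum (a % (l+1)) (l+1)
termination_by l _ => l
decreasing_by
  exact Nat.mod_lt _ l.succ_pos

open Finset

section SPQAux

/-- `1/(n+1) ≤ log (n+1) - log n` for `n ≥ 1`. -/
lemma one_div_le_log_sub (n : ℕ) (hn : 1 ≤ n) :
    (1:ℝ)/(n+1) ≤ Real.log (n+1) - Real.log n := by
  have hn0 : (0:ℝ) < n := by exact_mod_cast hn
  have hn1 : (0:ℝ) < (n:ℝ)+1 := by linarith
  have h := Real.log_le_sub_one_of_pos (x := (n:ℝ)/((n:ℝ)+1)) (by positivity)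
  rw [Real.log_div (by positivity) (by positivity)] at h
  have : (n:ℝ)/((n:ℝ)+1) - 1 = -(1/((n:ℝ)+1)) := by field_simp; ring
  rw [this] at h
  linarith

/-- Harmonic sum bound: `∑_{t=1}^n 1/t ≤ 1 + log n`. -/
lemma harmonic_le (n : ℕ) : ∑ t ∈ Finset.Icc 1 n, (1:ℝ)/t ≤ 1 + Real.log n := by
  induction n with
  | zero => simp [Real.log_zero]
  | succ n ih =>
    rcases Nat.eq_zero_or_pos n with hn | hn
    · subst hn; simp
    · rw [Finset.sum_Icc_succ_top (by omega : 1 ≤ n+1)]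
      have h2 := one_div_le_log_sub n hn
      have hlog : Real.log n ≤ Real.log (n+1) := by
        apply Real.log_le_log (by positivity)
        push_cast; linarith
      push_cast
      push_cast at ih h2
      linarith

/-- Sum of reciprocals over a set contained in one residue class mod k. -/
lemma apsum (a k : ℕ) (X : Finset ℕ) (hX : X ⊆ Finset.Icc 1 a) (hk : 0 < k)
    (hcong : ∀ x₁ ∈ X, ∀ x₂ ∈ X, (k:ℤ) ∣ (x₁:ℤ) - (x₂:ℤ)) (hne : X.Nonempty) :
    ∑ x ∈ X, (1:ℝ)/x ≤ 1/(X.min' hne) + (1 + Real.log a)/k := by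
  set m := X.min' hne with hm
  have hmX : m ∈ X := X.min'_mem hne
  have hmin : ∀ x ∈ X, m ≤ x := fun x hx => X.min'_le x hx
  rw [← Finset.sum_erase_add X _ hmX]
  have key : ∀ x ∈ X.erase m, 1 ≤ (x - m)/k ∧ (x-m)/k ≤ a ∧ x = m + k * ((x-m)/k) := by
    intro x hx
    have hxX : x ∈ X := Finset.mem_of_mem_erase hx
    have hxm : x ≠ m := Finset.ne_of_mem_erase hx
    have hle : m ≤ x := hmin x hxX
    have hdvd : k ∣ (x - m) := by
      have := hcong x hxX m hmX
      have h2 : ((x - m : ℕ) : ℤ) = (x:ℤ) - m := by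
        push_cast [Nat.cast_sub hle]; ring
      exact_mod_cast h2 ▸ this
    have hpos : 0 < x - m := by omega
    obtain ⟨c, hc⟩ := hdvd
    have hc1 : 1 ≤ c := by nlinarith [hk]
    have hxa : x ≤ a := (Finset.mem_Icc.mp (hX hxX)).2
    refine ⟨?_, ?_, ?_⟩
    · rw [hc, Nat.mul_div_cancel_left _ hk]; exact hc1
    · rw [hc, Nat.mul_div_cancel_left _ hk]
      calc c ≤ k * c := Nat.le_mul_of_pos_left _ hk
        _ = x - m := hc.symm
        _ ≤ a := by omega
    · rw [hc, Nat.mul_div_cancel_left _ hk]; omega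
  have h1 : ∑ x ∈ X.erase m, (1:ℝ)/x ≤ ∑ x ∈ X.erase m, (1:ℝ)/((k * ((x-m)/k) : ℕ) : ℝ) := by
    apply Finset.sum_le_sum
    intro x hx
    obtain ⟨h1', h2', h3'⟩ := key x hx
    have hb : (0:ℝ) < ((k * ((x-m)/k) : ℕ) : ℝ) := by
      have : 0 < k * ((x-m)/k) := by positivity
      exact_mod_cast this
    apply one_div_le_one_div_of_le hb
    exact_mod_cast by omega
  have hinj : ∀ x₁ ∈ X.erase m, ∀ x₂ ∈ X.erase m, (x₁-m)/k = (x₂-m)/k → x₁ = x₂ := by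
    intro x₁ h₁ x₂ h₂ he
    have e₁ := (key x₁ h₁).2.2; have e₂ := (key x₂ h₂).2.2
    rw [he] at e₁; omega
  have h2 : ∑ x ∈ X.erase m, (1:ℝ)/((k * ((x-m)/k) : ℕ) : ℝ)
      = ∑ w ∈ (X.erase m).image (fun x => (x-m)/k), (1:ℝ)/((k*w : ℕ) : ℝ) := by
    rw [Finset.sum_image hinj]
  have h3 : ∑ w ∈ (X.erase m).image (fun x => (x-m)/k), (1:ℝ)/((k*w : ℕ) : ℝ)
      ≤ ∑ w ∈ Finset.Icc 1 a, (1:ℝ)/((k*w : ℕ) : ℝ) := by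
    apply Finset.sum_le_sum_of_subset_of_nonneg
    · intro w hw
      obtain ⟨x, hx, rfl⟩ := Finset.mem_image.mp hw
      exact Finset.mem_Icc.mpr ⟨(key x hx).1, (key x hx).2.1⟩
    · intro i _ _; positivity
  have h4 : ∑ w ∈ Finset.Icc 1 a, (1:ℝ)/((k*w : ℕ) : ℝ) ≤ (1 + Real.log a)/k := by
    have hrw : ∀ w : ℕ, (1:ℝ)/((k*w : ℕ) : ℝ) = (1/k) * (1/w) := by
      intro w; push_cast; rw [one_div_mul_one_div]
    simp_rw [hrw]
    rw [← Finset.mul_sum]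
    rw [div_eq_mul_one_div ((1:ℝ) + Real.log a) k, mul_comm ((1:ℝ) + Real.log a) (1/(k:ℝ))]
    apply mul_le_mul_of_nonneg_left (harmonic_le a)
    positivity
  have h5 : ∑ x ∈ X.erase m, (1:ℝ)/x ≤ (1 + Real.log a)/k :=
    le_trans h1 (le_trans (le_of_eq h2) (le_trans h3 h4))
  linarith

/-- Cardinality of a set of naturals ≤ bound lying in a single residue class mod k₁. -/
lemma ap_card (k₁ : ℕ) (hk₁ : 0 < k₁) (F : Finset ℕ) (bound : ℕ) (hF : ∀ x ∈ F, x ≤ bound)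
    (hcong : ∀ x₁ ∈ F, ∀ x₂ ∈ F, (k₁:ℤ) ∣ (x₁:ℤ) - (x₂:ℤ)) : F.card ≤ bound/k₁ + 1 := by
  rcases F.eq_empty_or_nonempty with rfl | hne
  · simp
  set mn := F.min' hne with hmn
  have hmnF : mn ∈ F := F.min'_mem hne
  have key : ∀ x ∈ F, ∃ c, x = mn + k₁ * c ∧ c ≤ bound/k₁ := by
    intro x hx
    have hle : mn ≤ x := F.min'_le x hx
    have hdvd : k₁ ∣ (x - mn) := by
      have := hcong x hx mn hmnF
      have h2 : ((x - mn : ℕ) : ℤ) = (x:ℤ) - mn := by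
        push_cast [Nat.cast_sub hle]; ring
      exact_mod_cast h2 ▸ this
    obtain ⟨c, hc⟩ := hdvd
    refine ⟨c, by omega, ?_⟩
    rw [Nat.le_div_iff_mul_le hk₁]
    have := hF x hx
    calc c * k₁ = k₁ * c := by ring
      _ = x - mn := hc.symm
      _ ≤ bound := by omega
  have : F.card ≤ (Finset.range (bound/k₁ + 1)).card := by
    apply Finset.card_le_card_of_injOn (fun x => (x - mn)/k₁)
    · intro x hx
      obtain ⟨c, hc, hcb⟩ := key x hx
      show (x - mn)/k₁ ∈ Finset.range (bound/k₁ + 1)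
      rw [Finset.mem_range, hc]
      have : (mn + k₁*c - mn)/k₁ = c := by
        rw [Nat.add_sub_cancel_left, Nat.mul_div_cancel_left _ hk₁]
      omega
    · intro x₁ h₁ x₂ h₂ he
      simp only at he
      obtain ⟨c₁, hc₁, _⟩ := key x₁ h₁
      obtain ⟨c₂, hc₂, _⟩ := key x₂ h₂
      have e₁ : (x₁ - mn)/k₁ = c₁ := by rw [hc₁, Nat.add_sub_cancel_left, Nat.mul_div_cancel_left _ hk₁]
      have e₂ : (x₂ - mn)/k₁ = c₂ := by rw [hc₂, Nat.add_sub_cancel_left, Nat.mul_div_cancel_left _ hk₁]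
      rw [e₁, e₂] at he
      rw [he] at hc₁
      omega
  simpa using this

open Classical in
noncomputable def Xset (a k k' : ℕ) : Finset ℕ :=
  (Finset.Icc 1 a).filter (fun x => ∃ y, x ≤ y ∧ k*y + k'*x = a)

lemma mem_Xset {a k k' x : ℕ} :
    x ∈ Xset a k k' ↔ (1 ≤ x ∧ x ≤ a) ∧ ∃ y, x ≤ y ∧ k*y + k'*x = a := by
  simp [Xset, Finset.mem_filter, Finset.mem_Icc, and_assoc]

noncomputable def x0inv (a k k' : ℕ) : ℝ :=
  if h : (Xset a k k').Nonempty then 1/((Xset a k k').min' h) else 0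

lemma x0inv_nonneg (a k k' : ℕ) : 0 ≤ x0inv a k k' := by
  unfold x0inv
  split
  · positivity
  · exact le_refl 0

lemma unitfiber (a k : ℕ) (hk : 0 < k) :
    ∑ k' ∈ (Finset.range (a+1)).filter (fun k' => k' ≤ k ∧ Nat.Coprime k k'),
      x0inv a k k' ≤ 2*(1 + Real.log a) := by
  classical
  set g := Nat.gcd a k with hg
  set s := (Finset.range (a+1)).filter
      (fun k' => k' ≤ k ∧ Nat.Coprime k k' ∧ (Xset a k k').Nonempty) with hs
  -- restrict sum to s
  have hsub : s ⊆ (Finset.range (a+1)).filter (fun k' => k' ≤ k ∧ Nat.Coprime k k') := by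
    intro k' hk'
    simp only [hs, Finset.mem_filter] at hk' ⊢
    exact ⟨hk'.1, hk'.2.1, hk'.2.2.1⟩
  have hzero : ∀ k' ∈ (Finset.range (a+1)).filter (fun k' => k' ≤ k ∧ Nat.Coprime k k'),
      k' ∉ s → x0inv a k k' = 0 := by
    intro k' hk' hns
    simp only [hs, Finset.mem_filter] at hns hk'
    unfold x0inv
    rw [dif_neg]
    intro hne
    exact hns ⟨hk'.1, hk'.2.1, hk'.2.2, hne⟩
  rw [← Finset.sum_subset hsub hzero]
  -- the min function
  set m : ℕ → ℕ := fun k' =>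
    if h : (Xset a k k').Nonempty then (Xset a k k').min' h else 1 with hm
  have hval : ∀ k' ∈ s, x0inv a k k' = 1/(m k' : ℝ) := by
    intro k' hk'
    simp only [hs, Finset.mem_filter] at hk'
    unfold x0inv
    rw [dif_pos hk'.2.2.2, hm]
    simp [dif_pos hk'.2.2.2]
  rw [Finset.sum_congr rfl hval]
  have hcomp := Finset.sum_comp (s := s) (fun v : ℕ => (1:ℝ)/v) m
  rw [hcomp]
  -- facts about v = m k' for k' ∈ s
  have hgpos : 0 < g := Nat.gcd_pos_of_pos_right a hk
  have hgk : g ∣ k := Nat.gcd_dvd_right a k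
  have hvfact : ∀ k' ∈ s, (m k') ∈ Xset a k k' ∧ Nat.gcd (m k') k = g := by
    intro k' hk'
    simp only [hs, Finset.mem_filter] at hk'
    obtain ⟨hrange, hkk, hcop, hne⟩ := hk'
    have hmem : m k' ∈ Xset a k k' := by
      rw [hm]; simp only [dif_pos hne]; exact (Xset a k k').min'_mem hne
    refine ⟨hmem, ?_⟩
    obtain ⟨⟨hv1, hva⟩, y, hxy, heq⟩ := mem_Xset.mp hmem
    set v := m k'
    -- d := gcd v k divides a
    have hda : Nat.gcd v k ∣ a := by
      rw [← heq]
      exact Nat.dvd_add (Dvd.dvd.mul_right (Nat.gcd_dvd_right v k) y)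
        (Dvd.dvd.mul_left (Nat.gcd_dvd_left v k) k')
    have hdg : Nat.gcd v k ∣ g := Nat.dvd_gcd hda (Nat.gcd_dvd_right v k)
    have hgv : g ∣ v := by
      have h1 : g ∣ k' * v := by
        have : k' * v = a - k * y := by omega
        rw [this]
        exact Nat.dvd_sub (Nat.gcd_dvd_left a k) (Dvd.dvd.mul_right hgk y)
      have h2 : Nat.Coprime g k' := Nat.Coprime.coprime_dvd_left hgk hcop
      exact Nat.Coprime.dvd_of_dvd_mul_left h2 h1
    exact Nat.dvd_antisymm hdg (Nat.dvd_gcd hgv hgk)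
  -- bound each fiber card by 2*g
  have hfib : ∀ v ∈ s.image m, (s.filter (fun k' => m k' = v)).card ≤ 2*g := by
    intro v hv
    obtain ⟨k'₀, hk'₀, hveq⟩ := Finset.mem_image.mp hv
    set k₁ := k / g with hk₁def
    have hk₁pos : 0 < k₁ := Nat.div_pos (Nat.le_of_dvd hk hgk) hgpos
    have hkgk₁ : k = g * k₁ := (Nat.mul_div_cancel' hgk).symm
    -- v properties (from any fiber member, e.g. k'₀)
    have hv0 := hvfact k'₀ hk'₀
    rw [hveq] at hv0
    obtain ⟨hv0mem, hv0gcd⟩ := hv0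
    have hgv : g ∣ v := hv0gcd ▸ Nat.gcd_dvd_left v k
    set v₁ := v / g with hv₁def
    have hvgv₁ : v = g * v₁ := (Nat.mul_div_cancel' hgv).symm
    have hcop₁ : Nat.Coprime v₁ k₁ := by
      have h := Nat.coprime_div_gcd_div_gcd (m := v) (n := k) (Nat.gcd_pos_of_pos_right v hk)
      rwa [hv0gcd] at h
    have hcard := ap_card k₁ hk₁pos (s.filter (fun k' => m k' = v)) k
      (by
        intro x hx
        simp only [Finset.mem_filter, hs] at hx
        exact hx.1.2.1)
      (by
        intro x₁ h₁ x₂ h₂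
        simp only [Finset.mem_filter] at h₁ h₂
        have hm₁ := hvfact x₁ h₁.1
        have hm₂ := hvfact x₂ h₂.1
        rw [h₁.2] at hm₁
        rw [h₂.2] at hm₂
        obtain ⟨_, y₁, hxy₁, heq₁⟩ := mem_Xset.mp hm₁.1
        obtain ⟨_, y₂, hxy₂, heq₂⟩ := mem_Xset.mp hm₂.1
        -- k*y₁ + x₁*v = a = k*y₂ + x₂*v
        have hZ : (v:ℤ) * ((x₁:ℤ) - x₂) = (k:ℤ) * ((y₂:ℤ) - y₁) := by
          have e₁ : (k:ℤ)*y₁ + x₁*v = a := by exact_mod_cast heq₁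
          have e₂ : (k:ℤ)*y₂ + x₂*v = a := by exact_mod_cast heq₂
          ring_nf
          ring_nf at e₁ e₂
          linarith
        -- cancel g
        have hZ' : (v₁:ℤ) * ((x₁:ℤ) - x₂) = (k₁:ℤ) * ((y₂:ℤ) - y₁) := by
          have hgne : (g:ℤ) ≠ 0 := by exact_mod_cast hgpos.ne'
          apply mul_left_cancel₀ hgne
          have hv' : (v:ℤ) = g * v₁ := by exact_mod_cast hvgv₁
          have hk' : (k:ℤ) = g * k₁ := by exact_mod_cast hkgk₁
          rw [hv', hk'] at hZ
          linarith [hZ]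
        have hdvd : (k₁:ℤ) ∣ (v₁:ℤ) * ((x₁:ℤ) - x₂) := Dvd.intro _ hZ'.symm
        have hic : IsCoprime (k₁:ℤ) (v₁:ℤ) :=
          Nat.isCoprime_iff_coprime.mpr (Nat.coprime_comm.mp hcop₁)
        exact hic.dvd_of_dvd_mul_left hdvd)
    have hkk₁ : k / k₁ = g := by
      conv_lhs => rw [hkgk₁]
      exact Nat.mul_div_cancel g hk₁pos
    calc (s.filter (fun k' => m k' = v)).card ≤ k/k₁ + 1 := hcard
      _ = g + 1 := by rw [hkk₁]
      _ ≤ 2*g := by omega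
  -- facts about the image
  have himg : ∀ v ∈ s.image m, g ∣ v ∧ 1 ≤ v ∧ v ≤ a := by
    intro v hv
    obtain ⟨k', hk', hveq⟩ := Finset.mem_image.mp hv
    have := hvfact k' hk'
    rw [hveq] at this
    obtain ⟨hmem, hgcd⟩ := this
    obtain ⟨⟨h1, h2⟩, _⟩ := mem_Xset.mp hmem
    exact ⟨hgcd ▸ Nat.gcd_dvd_left v k, h1, h2⟩
  have step1 : ∑ b ∈ s.image m, (s.filter (fun k' => m k' = b)).card • ((1:ℝ)/b)
      ≤ ∑ b ∈ s.image m, (2*(g:ℝ)) * (1/b) := by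
    apply Finset.sum_le_sum
    intro v hv
    rw [nsmul_eq_mul]
    apply mul_le_mul_of_nonneg_right _ (by positivity)
    have := hfib v hv
    push_cast
    exact_mod_cast this
  have step2 : ∑ b ∈ s.image m, (2*(g:ℝ)) * (1/b) = 2 * ∑ b ∈ s.image m, (g:ℝ)/b := by
    rw [Finset.mul_sum]
    apply Finset.sum_congr rfl
    intro v _
    push_cast
    ring
  have hinj2 : ∀ v₁ ∈ s.image m, ∀ v₂ ∈ s.image m, v₁/g = v₂/g → v₁ = v₂ := by
    intro v₁ h₁ v₂ h₂ he
    obtain ⟨hd₁, _, _⟩ := himg v₁ h₁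
    obtain ⟨hd₂, _, _⟩ := himg v₂ h₂
    obtain ⟨c₁, rfl⟩ := hd₁
    obtain ⟨c₂, rfl⟩ := hd₂
    rw [Nat.mul_div_cancel_left _ hgpos, Nat.mul_div_cancel_left _ hgpos] at he
    rw [he]
  have step3 : ∑ b ∈ s.image m, (g:ℝ)/b = ∑ w ∈ (s.image m).image (fun v => v/g), (1:ℝ)/w := by
    rw [Finset.sum_image hinj2]
    apply Finset.sum_congr rfl
    intro v hv
    obtain ⟨hdv, hv1, _⟩ := himg v hv
    obtain ⟨c, rfl⟩ := hdv
    rw [Nat.mul_div_cancel_left _ hgpos]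
    have hc : 1 ≤ c := by
      rcases Nat.eq_zero_or_pos c with rfl | h
      · omega
      · exact h
    have hgr : (0:ℝ) < g := by exact_mod_cast hgpos
    have hcr : (0:ℝ) < c := by exact_mod_cast hc
    push_cast
    field_simp
  have step4 : ∑ w ∈ (s.image m).image (fun v => v/g), (1:ℝ)/w ≤ 1 + Real.log a := by
    refine le_trans (Finset.sum_le_sum_of_subset_of_nonneg ?_ ?_) (harmonic_le a)
    · intro w hw
      obtain ⟨v, hv, rfl⟩ := Finset.mem_image.mp hw
      obtain ⟨hdv, hv1, hva⟩ := himg v hv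
      rw [Finset.mem_Icc]
      constructor
      · have : g ≤ v := Nat.le_of_dvd (by omega) hdv
        exact Nat.one_le_div_iff hgpos |>.mpr this
      · exact le_trans (Nat.div_le_self v g) hva
    · intro i _ _; positivity
  calc ∑ b ∈ s.image m, (s.filter (fun k' => m k' = b)).card • ((1:ℝ)/b)
      ≤ ∑ b ∈ s.image m, (2*(g:ℝ)) * (1/b) := step1
    _ = 2 * ∑ b ∈ s.image m, (g:ℝ)/b := step2
    _ = 2 * ∑ w ∈ (s.image m).image (fun v => v/g), (1:ℝ)/w := by rw [step3]
    _ ≤ 2 * (1 + Real.log a) := by linarith [step4]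

/-- The multiset of CF steps of the Euclid run on (x,y), carrying continuant context. -/
def Steps : ℕ → ℕ → ℕ → ℕ → Finset (ℕ × ℕ × ℕ × ℕ)
  | _, _, 0, _ => ∅
  | k', k, (x+1), y =>
      insert (k', k, x+1, y) (Steps k (y/(x+1)*k + k') (y % (x+1)) (x+1))
termination_by _ _ x _ => x
decreasing_by
  exact Nat.mod_lt _ x.succ_pos

lemma cF_zero (y : ℕ) : contFracPartialQuotientSum 0 y = 0 := by rw [contFracPartialQuotientSum]

lemma cF_succ (x y : ℕ) : contFracPartialQuotientSum (x+1) y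
    = y/(x+1) + contFracPartialQuotientSum (y % (x+1)) (x+1) := by
  rw [contFracPartialQuotientSum]

lemma Steps_zero (k' k y : ℕ) : Steps k' k 0 y = ∅ := by rw [Steps]

lemma Steps_succ (k' k x y : ℕ) : Steps k' k (x+1) y
    = insert (k', k, x+1, y) (Steps k (y/(x+1)*k + k') (y % (x+1)) (x+1)) := by
  rw [Steps]

/-- first-two-coordinates sum grows along the run -/
lemma steps_fst_sum_lb : ∀ x y k' k, 0 < k → x ≤ y →
    ∀ q ∈ Steps k' k x y, k + k' ≤ q.2.1 + q.1 := by
  intro x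
  induction x using Nat.strong_induction_on with
  | _ x ih =>
    intro y k' k hk hxy q hq
    match x, hq with
    | 0, hq => simp [Steps_zero] at hq
    | (u+1), hq =>
      rw [Steps_succ] at hq
      rcases Finset.mem_insert.mp hq with rfl | hq
      · simp
      · have hq₀ : 1 ≤ y/(u+1) := (Nat.one_le_div_iff (Nat.succ_pos u)).mpr hxy
        have := ih (y % (u+1)) (Nat.mod_lt _ (Nat.succ_pos u)) (u+1) k (y/(u+1)*k + k')
          (by positivity) (le_of_lt (Nat.mod_lt _ (Nat.succ_pos u))) q hq
        have h2 : k + k' ≤ (y/(u+1)*k + k') + k := by nlinarith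
        omega

/-- membership invariants -/
lemma steps_mem_inv (A : ℕ) : ∀ x y k' k, 0 < x → x ≤ y → 0 < k → k' ≤ k →
    Nat.Coprime k k' → k*y + k'*x = A →
    ∀ q ∈ Steps k' k x y,
      q.2.1 * q.2.2.2 + q.1 * q.2.2.1 = A ∧ Nat.Coprime q.2.1 q.1 ∧ q.1 ≤ q.2.1 ∧
        0 < q.2.1 ∧ 0 < q.2.2.1 ∧ q.2.2.1 ≤ q.2.2.2 := by
  intro x
  induction x using Nat.strong_induction_on with
  | _ x ih =>
    intro y k' k hx hxy hk hk'k hcop hid q hq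
    match x, hx, hq with
    | (u+1), hx, hq =>
      rw [Steps_succ] at hq
      set q₀ := y/(u+1) with hq₀def
      have hq₀ : 1 ≤ q₀ := (Nat.one_le_div_iff (Nat.succ_pos u)).mpr hxy
      rcases Finset.mem_insert.mp hq with rfl | hq
      · exact ⟨hid, hcop, hk'k, hk, Nat.succ_pos u, hxy⟩
      · rcases Nat.eq_zero_or_pos (y % (u+1)) with hr | hr
        · rw [hr, Steps_zero] at hq; simp at hq
        · have hdm : (u+1) * q₀ + y % (u+1) = y := Nat.div_add_mod y (u+1)
          refine ih (y % (u+1)) (Nat.mod_lt _ (Nat.succ_pos u)) (u+1) k (q₀*k + k')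
            hr (le_of_lt (Nat.mod_lt _ (Nat.succ_pos u))) (by positivity) (by nlinarith)
            ?_ ?_ q hq
          · rw [mul_comm]
            exact (Nat.coprime_mul_left_add_left k' k q₀).mpr (Nat.coprime_comm.mp hcop)
          · -- (q₀*k + k')*(u+1) + k*(y%(u+1)) = A
            calc (q₀*k + k')*(u+1) + k*(y % (u+1))
                = k*((u+1) * q₀ + y % (u+1)) + k'*(u+1) := by ring
              _ = k*y + k'*(u+1) := by rw [hdm]
              _ = A := hid

/-- Sum of quotients over the steps equals the sum of partial quotients. -/
lemma steps_weight : ∀ x y k' k, x ≤ y → 0 < k →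
    ∑ q ∈ Steps k' k x y, q.2.2.2 / q.2.2.1 = contFracPartialQuotientSum x y := by
  intro x
  induction x using Nat.strong_induction_on with
  | _ x ih =>
    intro y k' k hxy hk
    match x with
    | 0 => rw [Steps_zero, cF_zero]; simp
    | (u+1) =>
      rw [Steps_succ, cF_succ]
      have hnotmem : (k', k, u+1, y) ∉ Steps k (y/(u+1)*k + k') (y % (u+1)) (u+1) := by
        intro hmem
        have hq₀ : 1 ≤ y/(u+1) := (Nat.one_le_div_iff (Nat.succ_pos u)).mpr hxy
        have := steps_fst_sum_lb (y % (u+1)) (u+1) k (y/(u+1)*k + k')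
          (by positivity) (le_of_lt (Nat.mod_lt _ (Nat.succ_pos u))) _ hmem
        simp only at this
        nlinarith
      rw [Finset.sum_insert hnotmem]
      simp only
      congr 1
      exact ih (y % (u+1)) (Nat.mod_lt _ (Nat.succ_pos u)) (u+1) k (y/(u+1)*k + k')
        (le_of_lt (Nat.mod_lt _ (Nat.succ_pos u))) (by
          have hq₀ : 1 ≤ y/(u+1) := (Nat.one_le_div_iff (Nat.succ_pos u)).mpr hxy
          positivity)

/-- Coefficient lemma: every step is a nonnegative integer combination of the context. -/
lemma steps_coeff : ∀ x y k' k, 0 < x → x ≤ y →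
    ∀ q ∈ Steps k' k x y, q = (k', k, x, y) ∨
      ∃ P Q R S : ℕ, 0 < P ∧ R ≤ P ∧ S ≤ Q ∧
        y = P * q.2.2.2 + Q * q.2.2.1 ∧ x = R * q.2.2.2 + S * q.2.2.1 ∧
        q.2.1 = P * k + R * k' ∧ q.1 = Q * k + S * k' ∧
        ((P*S : ℤ) - (Q*R : ℤ) = 1 ∨ (P*S : ℤ) - (Q*R : ℤ) = -1) := by
  intro x
  induction x using Nat.strong_induction_on with
  | _ x ih =>
    intro y k' k hx hxy q hq
    match x, hx, hq with
    | (u+1), hx, hq =>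
      rw [Steps_succ] at hq
      set q₀ := y/(u+1) with hq₀def
      set r := y % (u+1) with hrdef
      have hq₀ : 1 ≤ q₀ := (Nat.one_le_div_iff (Nat.succ_pos u)).mpr hxy
      have hdm : (u+1) * q₀ + r = y := Nat.div_add_mod y (u+1)
      rcases Finset.mem_insert.mp hq with rfl | hq
      · exact Or.inl rfl
      · rcases Nat.eq_zero_or_pos r with hr | hr
        · rw [hr, Steps_zero] at hq; simp at hq
        · right
          have hIH := ih r (Nat.mod_lt _ (Nat.succ_pos u)) (u+1) k (q₀*k + k')
            hr (le_of_lt (Nat.mod_lt _ (Nat.succ_pos u))) q hq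
          rcases hIH with heq | ⟨P₁, Q₁, R₁, S₁, hP₁, hRP₁, hSQ₁, hy₁, hx₁, hk₁, hk'₁, hdet₁⟩
          · -- q is the base of the tail run
            subst heq
            refine ⟨q₀, 1, 1, 0, hq₀, hq₀, zero_le_one, ?_, ?_, ?_, ?_, ?_⟩
            · show y = q₀ * (u+1) + 1 * r
              have : q₀ * (u+1) = (u+1) * q₀ := mul_comm _ _
              omega
            · show u+1 = 1 * (u+1) + 0 * r
              omega
            · show q₀ * k + k' = q₀ * k + 1 * k'
              omega
            · show k = 1 * k + 0 * k'
              omega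
            · right
              show (q₀:ℤ) * 0 - 1 * 1 = -1
              ring
          · -- compose with the tail coefficients
            refine ⟨q₀*P₁ + R₁, q₀*Q₁ + S₁, P₁, Q₁, ?_, ?_, ?_, ?_, hy₁, ?_, ?_, ?_⟩
            · positivity
            · nlinarith
            · nlinarith
            · calc y = (u+1) * q₀ + r := hdm.symm
                _ = (P₁ * q.2.2.2 + Q₁ * q.2.2.1) * q₀ + r := by rw [← hy₁]
                _ = (P₁ * q.2.2.2 + Q₁ * q.2.2.1) * q₀ + (R₁ * q.2.2.2 + S₁ * q.2.2.1) := by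
                    rw [← hx₁]
                _ = (q₀*P₁ + R₁) * q.2.2.2 + (q₀*Q₁ + S₁) * q.2.2.1 := by ring
            · rw [hk₁]; ring
            · rw [hk'₁]; ring
            · rcases hdet₁ with h | h
              · right; push_cast; linear_combination -h
              · left; push_cast; linear_combination -h

def Dset (a : ℕ) : Finset (ℕ × ℕ × ℕ × ℕ) :=
  ((Finset.range (a+1)) ×ˢ (Finset.range (a+1)) ×ˢ (Finset.range (a+1)) ×ˢ
      (Finset.range (a+1))).filter
    (fun q => q.2.1 * q.2.2.2 + q.1 * q.2.2.1 = a ∧ Nat.Coprime q.2.1 q.1 ∧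
      q.1 ≤ q.2.1 ∧ 0 < q.2.1 ∧ 0 < q.2.2.1 ∧ q.2.2.1 ≤ q.2.2.2)

lemma mem_Dset {a : ℕ} {q : ℕ × ℕ × ℕ × ℕ} :
    q ∈ Dset a ↔ (q.1 ≤ a ∧ q.2.1 ≤ a ∧ q.2.2.1 ≤ a ∧ q.2.2.2 ≤ a) ∧
      (q.2.1 * q.2.2.2 + q.1 * q.2.2.1 = a ∧ Nat.Coprime q.2.1 q.1 ∧
        q.1 ≤ q.2.1 ∧ 0 < q.2.1 ∧ 0 < q.2.2.1 ∧ q.2.2.1 ≤ q.2.2.2) := by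
  obtain ⟨k', k, x, y⟩ := q
  unfold Dset
  rw [Finset.mem_filter, Finset.mem_product, Finset.mem_product, Finset.mem_product]
  simp only [Finset.mem_range, Nat.lt_succ_iff]

lemma steps_subset_D (a l : ℕ) (hl : 1 ≤ l) (hla : l ≤ a) :
    Steps 0 1 l a ⊆ Dset a := by
  intro q hq
  have hinv := steps_mem_inv a l a 0 1 (by omega) hla one_pos (by omega)
    (Nat.coprime_one_left 0) (by ring) q hq
  obtain ⟨hid, hcop, hk'k, hkpos, hxpos, hxy⟩ := hinv
  rw [mem_Dset]
  have hy : q.2.2.2 ≤ a := by nlinarith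
  have hk : q.2.1 ≤ a := by nlinarith
  refine ⟨⟨le_trans hk'k hk, hk, le_trans hxy hy, hy⟩, hid, hcop, hk'k, hkpos, hxpos, hxy⟩

def candSet (k k' : ℕ) : Finset (ℕ × ℕ) :=
  ((Finset.range (k+1)) ×ˢ (Finset.range (k'+1))).filter
    (fun p => (k*p.2 : ℤ) - k'*p.1 = 1 ∨ (k*p.2 : ℤ) - k'*p.1 = -1)

lemma mem_candSet {k k' : ℕ} {p : ℕ × ℕ} :
    p ∈ candSet k k' ↔ (p.1 ≤ k ∧ p.2 ≤ k') ∧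
      ((k*p.2 : ℤ) - k'*p.1 = 1 ∨ (k*p.2 : ℤ) - k'*p.1 = -1) := by
  unfold candSet
  rw [Finset.mem_filter, Finset.mem_product]
  simp only [Finset.mem_range, Nat.lt_succ_iff]

lemma candSet_card (k k' : ℕ) (hk : 0 < k) (hco : Nat.Coprime k k') :
    (candSet k k').card ≤ 4 := by
  rcases Nat.eq_zero_or_pos k' with rfl | hk'
  · have : candSet k 0 = ∅ := by
      rw [Finset.eq_empty_iff_forall_notMem]
      intro p hp
      rw [mem_candSet] at hp
      obtain ⟨⟨_, hp2⟩, h⟩ := hp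
      have : p.2 = 0 := by omega
      rw [this] at h
      push_cast at h
      omega
    rw [this]; simp
  · have hinj : Set.InjOn (fun p : ℕ × ℕ => ((decide ((k*p.2 : ℤ) - k'*p.1 = 1)),
        decide (p.2 = k'))) (candSet k k') := by
      intro p₁ hp₁ p₂ hp₂ he
      have hp₁ := mem_candSet.mp (Finset.mem_coe.mp hp₁)
      have hp₂ := mem_candSet.mp (Finset.mem_coe.mp hp₂)
      obtain ⟨⟨hR₁, hS₁⟩, hdet₁⟩ := hp₁
      obtain ⟨⟨hR₂, hS₂⟩, hdet₂⟩ := hp₂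
      simp only [Prod.mk.injEq, decide_eq_decide] at he
      obtain ⟨he1, he2⟩ := he
      have hdet : (k*p₁.2 : ℤ) - k'*p₁.1 = (k*p₂.2 : ℤ) - k'*p₂.1 := by
        rcases hdet₁ with h₁ | h₁ <;> rcases hdet₂ with h₂ | h₂ <;> rw [h₁, h₂] <;>
          simp [h₁, h₂] at he1 ⊢ <;> omega
      have hdvd : (k':ℤ) ∣ (k:ℤ) * ((p₁.2:ℤ) - p₂.2) := ⟨(p₁.1:ℤ) - p₂.1, by linarith⟩
      have hic : IsCoprime ((k':ℤ)) ((k:ℤ)) :=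
        Nat.isCoprime_iff_coprime.mpr (Nat.coprime_comm.mp hco)
      have hdvd2 : (k':ℤ) ∣ ((p₁.2:ℤ) - p₂.2) := hic.dvd_of_dvd_mul_left hdvd
      have hS : p₁.2 = p₂.2 := by
        rcases (by tauto : (p₁.2 = k' ∧ p₂.2 = k') ∨ (p₁.2 ≠ k' ∧ p₂.2 ≠ k')) with ⟨e₁, e₂⟩ | ⟨n₁, n₂⟩
        · omega
        · have h1 : p₁.2 < k' := lt_of_le_of_ne hS₁ n₁
          have h2 : p₂.2 < k' := lt_of_le_of_ne hS₂ n₂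
          have habs : |(p₁.2:ℤ) - p₂.2| < (k':ℤ) := by
            rw [abs_lt]
            constructor <;> [skip; skip] <;> push_cast <;> omega
          have := Int.eq_zero_of_abs_lt_dvd hdvd2 habs
          omega
      have hR : p₁.1 = p₂.1 := by
        have : (k':ℤ) * ((p₁.1:ℤ) - p₂.1) = 0 := by
          rw [hS] at hdet; linarith
        have hk'0 : (k':ℤ) ≠ 0 := by exact_mod_cast hk'.ne'
        have := mul_eq_zero.mp this
        rcases this with h | h
        · exact absurd h hk'0
        · omega
      exact Prod.ext hR hS
    calc (candSet k k').card ≤ (Finset.univ : Finset (Bool × Bool)).card :=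
          Finset.card_le_card_of_injOn _ (fun p _ => Finset.mem_univ _) hinj
      _ = 4 := by simp

/-- Each quadruple arises from at most 5 values of `l`. -/
lemma count_le (a : ℕ) (q : ℕ × ℕ × ℕ × ℕ) (hq : q ∈ Dset a) :
    ((Finset.Icc 1 a).filter (fun l => q ∈ Steps 0 1 l a)).card ≤ 5 := by
  obtain ⟨hrange, hid, hcop, hk'k, hkpos, hxpos, hxy⟩ := mem_Dset.mp hq
  have hsub : (Finset.Icc 1 a).filter (fun l => q ∈ Steps 0 1 l a) ⊆
      insert q.2.2.1 ((candSet q.2.1 q.1).image (fun p => p.1 * q.2.2.2 + p.2 * q.2.2.1)) := by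
    intro l hl
    rw [Finset.mem_filter, Finset.mem_Icc] at hl
    obtain ⟨⟨hl1, hla⟩, hmem⟩ := hl
    rcases steps_coeff l a 0 1 (by omega) hla q hmem with heq | ⟨P, Q, R, S, hP, hRP, hSQ, hy, hx, hk, hk', hdet⟩
    · rw [Finset.mem_insert]
      left
      rw [heq]
    · rw [Finset.mem_insert, Finset.mem_image]
      right
      have hPk : P = q.2.1 := by omega
      have hQk' : Q = q.1 := by omega
      refine ⟨(R, S), ?_, hx.symm⟩
      rw [mem_candSet]
      refine ⟨⟨by omega, by omega⟩, ?_⟩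
      rcases hdet with h | h
      · left; rw [← hPk, ← hQk']; push_cast; push_cast at h; linarith
      · right; rw [← hPk, ← hQk']; push_cast; push_cast at h; linarith
  calc ((Finset.Icc 1 a).filter (fun l => q ∈ Steps 0 1 l a)).card
      ≤ (insert q.2.2.1 ((candSet q.2.1 q.1).image
          (fun p => p.1 * q.2.2.2 + p.2 * q.2.2.1))).card := Finset.card_le_card hsub
    _ ≤ ((candSet q.2.1 q.1).image (fun p => p.1 * q.2.2.2 + p.2 * q.2.2.1)).card + 1 :=
        Finset.card_insert_le _ _
    _ ≤ (candSet q.2.1 q.1).card + 1 := by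
        have := Finset.card_image_le (s := candSet q.2.1 q.1)
          (f := fun p : ℕ × ℕ => p.1 * q.2.2.2 + p.2 * q.2.2.1)
        omega
    _ ≤ 5 := by
        have := candSet_card q.2.1 q.1 hkpos hcop
        omega

/-- Master count: the full sum is at most 5 times the weighted quadruple sum. -/
lemma main_count (a : ℕ) :
    ∑ l ∈ Finset.Icc 1 a, contFracPartialQuotientSum l a
      ≤ 5 * ∑ q ∈ Dset a, q.2.2.2 / q.2.2.1 := by
  have step1 : ∑ l ∈ Finset.Icc 1 a, contFracPartialQuotientSum l a
      = ∑ l ∈ Finset.Icc 1 a, ∑ q ∈ Steps 0 1 l a, q.2.2.2 / q.2.2.1 := by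
    apply Finset.sum_congr rfl
    intro l hl
    rw [Finset.mem_Icc] at hl
    exact (steps_weight l a 0 1 hl.2 one_pos).symm
  rw [step1]
  have step2 : ∀ l ∈ Finset.Icc 1 a, ∑ q ∈ Steps 0 1 l a, q.2.2.2 / q.2.2.1
      = ∑ q ∈ Dset a, if q ∈ Steps 0 1 l a then q.2.2.2 / q.2.2.1 else 0 := by
    intro l hl
    rw [Finset.mem_Icc] at hl
    rw [Finset.sum_ite_mem, Finset.inter_eq_right.mpr (steps_subset_D a l hl.1 hl.2)]
  rw [Finset.sum_congr rfl step2, Finset.sum_comm]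
  have step3 : ∀ q ∈ Dset a,
      (∑ l ∈ Finset.Icc 1 a, if q ∈ Steps 0 1 l a then q.2.2.2 / q.2.2.1 else 0)
      ≤ 5 * (q.2.2.2 / q.2.2.1) := by
    intro q hq
    rw [← Finset.sum_filter, Finset.sum_const, smul_eq_mul]
    exact Nat.mul_le_mul_right _ (count_le a q hq)
  calc ∑ q ∈ Dset a, (∑ l ∈ Finset.Icc 1 a, if q ∈ Steps 0 1 l a then q.2.2.2 / q.2.2.1 else 0)
      ≤ ∑ q ∈ Dset a, 5 * (q.2.2.2 / q.2.2.1) := Finset.sum_le_sum step3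
    _ = 5 * ∑ q ∈ Dset a, q.2.2.2 / q.2.2.1 := by rw [Finset.mul_sum]

-- the analytic bound
lemma analytic (a : ℕ) :
    (↑(∑ q ∈ Dset a, q.2.2.2 / q.2.2.1) : ℝ) ≤ 4 * a * (1 + Real.log a)^2 := by
  classical
  set L : ℝ := Real.log a with hL
  -- cast the sum
  rw [Nat.cast_sum]
  -- pointwise bound by a/(k x)
  have hpw : ∀ q ∈ Dset a, (↑(q.2.2.2 / q.2.2.1) : ℝ) ≤ (a:ℝ)/(q.2.1 * q.2.2.1) := by
    intro q hq
    obtain ⟨hrange, hid, hcop, hk'k, hkpos, hxpos, hxy⟩ := mem_Dset.mp hq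
    have h1 : (↑(q.2.2.2 / q.2.2.1) : ℝ) ≤ (q.2.2.2 : ℝ)/(q.2.2.1 : ℝ) := Nat.cast_div_le
    have hky : (q.2.1 : ℝ) * q.2.2.2 ≤ a := by
      have : q.2.1 * q.2.2.2 ≤ a := by omega
      exact_mod_cast this
    have hkr : (0:ℝ) < q.2.1 := by exact_mod_cast hkpos
    have hxr : (0:ℝ) < q.2.2.1 := by exact_mod_cast hxpos
    have h2 : (q.2.2.2 : ℝ) ≤ (a:ℝ)/q.2.1 := by
      rw [le_div_iff₀ hkr]; linarith
    calc (↑(q.2.2.2 / q.2.2.1) : ℝ) ≤ (q.2.2.2 : ℝ)/(q.2.2.1 : ℝ) := h1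
      _ ≤ ((a:ℝ)/q.2.1)/(q.2.2.1:ℝ) := by gcongr
      _ = (a:ℝ)/(q.2.1 * q.2.2.1) := by rw [div_div]
  have hstep1 : ∑ q ∈ Dset a, (↑(q.2.2.2 / q.2.2.1) : ℝ)
      ≤ ∑ q ∈ Dset a, (a:ℝ)/(q.2.1 * q.2.2.1) := Finset.sum_le_sum hpw
  -- fiber over (k', k)
  have hmaps : ∀ q ∈ Dset a, (q.1, q.2.1) ∈ (Finset.range (a+1)) ×ˢ (Finset.range (a+1)) := by
    intro q hq
    obtain ⟨hrange, _⟩ := mem_Dset.mp hq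
    rw [Finset.mem_product, Finset.mem_range, Finset.mem_range]
    omega
  have hfib := Finset.sum_fiberwise_of_maps_to hmaps (fun q => (a:ℝ)/(q.2.1 * q.2.2.1))
  rw [← hfib] at hstep1
  set G1 : ℕ → ℕ → ℝ := fun k' k =>
    if k' ≤ k ∧ Nat.Coprime k k' then ((a:ℝ)/k) * x0inv a k k' else 0 with hG1
  set G2 : ℕ → ℕ → ℝ := fun k' k =>
    if k' ≤ k ∧ 1 ≤ k then ((a:ℝ)*(1+L))/((k:ℝ)^2) else 0 with hG2
  -- inner bound per pair m
  have hinner : ∀ m ∈ (Finset.range (a+1)) ×ˢ (Finset.range (a+1)),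
      (∑ q ∈ (Dset a).filter (fun q => (q.1, q.2.1) = m), (a:ℝ)/(q.2.1 * q.2.2.1))
      ≤ G1 m.1 m.2 + G2 m.1 m.2 := by
    intro m hm
    obtain ⟨k', k⟩ := m
    simp only [hG1, hG2]
    set F := (Dset a).filter (fun q => (q.1, q.2.1) = (k', k)) with hF
    have hLpos : (0:ℝ) ≤ 1 + L := by
      have : (0:ℝ) ≤ L := by
        rcases Nat.eq_zero_or_pos a with rfl | ha
        · simp [hL]
        · exact Real.log_nonneg (by exact_mod_cast ha)
      linarith
    rcases F.eq_empty_or_nonempty with hFe | hFne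
    · rw [hFe]
      simp only [Finset.sum_empty]
      have h1 : (0:ℝ) ≤ (if k' ≤ k ∧ Nat.Coprime k k' then ((a:ℝ)/k) * x0inv a k k' else 0) := by
        split
        · exact mul_nonneg (by positivity) (x0inv_nonneg a k k')
        · exact le_refl 0
      have h2 : (0:ℝ) ≤ (if k' ≤ k ∧ 1 ≤ k then ((a:ℝ)*(1+L))/(k^2) else 0) := by
        split
        · positivity
        · exact le_refl 0
      linarith
    · obtain ⟨q₀, hq₀⟩ := hFne
      have hq₀D : q₀ ∈ Dset a ∧ (q₀.1, q₀.2.1) = (k', k) := Finset.mem_filter.mp hq₀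
      obtain ⟨hrange₀, hid₀, hcop₀, hk'k₀, hkpos₀, _, _⟩ := mem_Dset.mp hq₀D.1
      have hkk : q₀.2.1 = k := by
        have := hq₀D.2; exact (Prod.mk.injEq _ _ _ _).mp this |>.2
      have hk'' : q₀.1 = k' := by
        have := hq₀D.2; exact (Prod.mk.injEq _ _ _ _).mp this |>.1
      have hkpos : 0 < k := hkk ▸ hkpos₀
      have hk'k : k' ≤ k := by rw [← hkk, ← hk'']; exact hk'k₀
      have hcop : Nat.Coprime k k' := by rw [← hkk, ← hk'']; exact hcop₀
      rw [if_pos ⟨hk'k, hcop⟩, if_pos ⟨hk'k, hkpos⟩]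
      -- facts for members of F
      have hFmem : ∀ q ∈ F, q.1 = k' ∧ q.2.1 = k ∧ q ∈ Dset a := by
        intro q hq
        have := Finset.mem_filter.mp hq
        exact ⟨(Prod.mk.injEq _ _ _ _).mp this.2 |>.1,
          (Prod.mk.injEq _ _ _ _).mp this.2 |>.2, this.1⟩
      -- rewrite the summand
      have hsummand : ∀ q ∈ F, (a:ℝ)/(q.2.1 * q.2.2.1) = (a:ℝ)/(k * q.2.2.1) := by
        intro q hq
        rw [(hFmem q hq).2.1]
      rw [Finset.sum_congr rfl hsummand]
      -- inject to x-values
      have hinj : ∀ q₁ ∈ F, ∀ q₂ ∈ F, q₁.2.2.1 = q₂.2.2.1 → q₁ = q₂ := by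
        intro q₁ h₁ q₂ h₂ he
        obtain ⟨e₁, e₂, hD₁⟩ := hFmem q₁ h₁
        obtain ⟨f₁, f₂, hD₂⟩ := hFmem q₂ h₂
        obtain ⟨_, hid₁, _⟩ := mem_Dset.mp hD₁
        obtain ⟨_, hid₂, _⟩ := mem_Dset.mp hD₂
        have hy : q₁.2.2.2 = q₂.2.2.2 := by
          rw [e₁, e₂] at hid₁
          rw [f₁, f₂] at hid₂
          rw [he] at hid₁
          have hcancel : k * q₁.2.2.2 = k * q₂.2.2.2 :=
            Nat.add_right_cancel (hid₁.trans hid₂.symm)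
          exact Nat.eq_of_mul_eq_mul_left hkpos hcancel
        exact Prod.ext (by rw [e₁, f₁]) (Prod.ext (by rw [e₂, f₂]) (Prod.ext he hy))
      have himage : ∑ q ∈ F, (a:ℝ)/(k * q.2.2.1)
          = ∑ x ∈ F.image (fun q => q.2.2.1), (a:ℝ)/(k * x) := by
        rw [Finset.sum_image hinj]
      rw [himage]
      set X := F.image (fun q => q.2.2.1) with hX
      have hXsub : X ⊆ Finset.Icc 1 a := by
        intro x hx
        obtain ⟨q, hq, rfl⟩ := Finset.mem_image.mp hx
        obtain ⟨_, _, hD⟩ := hFmem q hq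
        obtain ⟨hr, _, _, _, _, hxp, _⟩ := mem_Dset.mp hD
        rw [Finset.mem_Icc]
        exact ⟨hxp, hr.2.2.1⟩
      have hXcong : ∀ x₁ ∈ X, ∀ x₂ ∈ X, (k:ℤ) ∣ (x₁:ℤ) - (x₂:ℤ) := by
        intro x₁ hx₁ x₂ hx₂
        obtain ⟨q₁, hq₁, rfl⟩ := Finset.mem_image.mp hx₁
        obtain ⟨q₂, hq₂, rfl⟩ := Finset.mem_image.mp hx₂
        obtain ⟨e₁, e₂, hD₁⟩ := hFmem q₁ hq₁
        obtain ⟨f₁, f₂, hD₂⟩ := hFmem q₂ hq₂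
        obtain ⟨_, hid₁, _⟩ := mem_Dset.mp hD₁
        obtain ⟨_, hid₂, _⟩ := mem_Dset.mp hD₂
        rw [e₁, e₂] at hid₁
        rw [f₁, f₂] at hid₂
        have hdvd : (k:ℤ) ∣ (k':ℤ) * ((q₁.2.2.1:ℤ) - q₂.2.2.1) := by
          refine ⟨(q₂.2.2.2:ℤ) - q₁.2.2.2, ?_⟩
          have e1 : (k:ℤ)*q₁.2.2.2 + k'*q₁.2.2.1 = a := by exact_mod_cast hid₁
          have e2 : (k:ℤ)*q₂.2.2.2 + k'*q₂.2.2.1 = a := by exact_mod_cast hid₂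
          linarith
        have hic : IsCoprime ((k:ℤ)) ((k':ℤ)) := Nat.isCoprime_iff_coprime.mpr hcop
        exact hic.dvd_of_dvd_mul_left hdvd
      have hXne : X.Nonempty := ⟨q₀.2.2.1, Finset.mem_image.mpr ⟨q₀, hq₀, rfl⟩⟩
      -- sum ≤ (a/k) * (1/min + (1+L)/k)
      have hfactor : ∀ x : ℕ, (a:ℝ)/(k * x) = ((a:ℝ)/k) * (1/x) := by
        intro x; rw [← div_div, div_eq_mul_one_div ((a:ℝ)/k) (x:ℝ)]
      rw [Finset.sum_congr rfl (fun x _ => hfactor x), ← Finset.mul_sum]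
      have hap := apsum a k X hXsub hkpos hXcong hXne
      -- 1/min'(X) ≤ x0inv
      have hXsubXset : X ⊆ Xset a k k' := by
        intro x hx
        obtain ⟨q, hq, rfl⟩ := Finset.mem_image.mp hx
        obtain ⟨e₁, e₂, hD⟩ := hFmem q hq
        obtain ⟨hr, hidq, _, _, _, hxp, hxyq⟩ := mem_Dset.mp hD
        rw [mem_Xset]
        refine ⟨⟨hxp, hr.2.2.1⟩, q.2.2.2, hxyq, ?_⟩
        rw [← e₁, ← e₂]
        exact hidq
      have hXsetne : (Xset a k k').Nonempty := ⟨X.min' hXne, hXsubXset (X.min'_mem hXne)⟩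
      have hminle : (Xset a k k').min' hXsetne ≤ X.min' hXne :=
        Finset.min'_le _ _ (hXsubXset (X.min'_mem hXne))
      have hminpos : 0 < (Xset a k k').min' hXsetne := by
        have := (Xset a k k').min'_mem hXsetne
        rw [mem_Xset] at this
        omega
      have hx0 : (1:ℝ)/(X.min' hXne) ≤ x0inv a k k' := by
        unfold x0inv
        rw [dif_pos hXsetne]
        apply one_div_le_one_div_of_le
        · exact_mod_cast hminpos
        · exact_mod_cast hminle
      have hak : (0:ℝ) ≤ (a:ℝ)/k := by positivity
      calc ((a:ℝ)/k) * (∑ x ∈ X, (1:ℝ)/x)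
          ≤ ((a:ℝ)/k) * (1/(X.min' hXne) + (1 + L)/k) := by
            apply mul_le_mul_of_nonneg_left _ hak
            exact_mod_cast hap
        _ ≤ ((a:ℝ)/k) * (x0inv a k k' + (1 + L)/k) := by
            apply mul_le_mul_of_nonneg_left _ hak
            linarith
        _ = ((a:ℝ)/k) * x0inv a k k' + ((a:ℝ)*(1+L))/(k^2) := by
            rw [mul_add, div_mul_div_comm, sq]
  -- now sum the two pieces over all pairs
  have hLpos : (0:ℝ) ≤ 1 + L := by
    have : (0:ℝ) ≤ L := by
      rcases Nat.eq_zero_or_pos a with rfl | ha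
      · simp [hL]
      · exact Real.log_nonneg (by exact_mod_cast ha)
    linarith
  have harm : ∑ t ∈ Finset.Icc 1 a, (1:ℝ)/t ≤ 1 + L := harmonic_le a
  -- Piece 1
  have hP1 : ∑ m ∈ (Finset.range (a+1)) ×ˢ (Finset.range (a+1)), G1 m.1 m.2
      ≤ 2*(a:ℝ)*(1+L)^2 := by
    rw [Finset.sum_product' (f := G1), Finset.sum_comm]
    simp only [hG1]
    have hk_bound : ∀ k ∈ Finset.range (a+1),
        (∑ k' ∈ Finset.range (a+1),
          if k' ≤ k ∧ Nat.Coprime k k' then ((a:ℝ)/k) * x0inv a k k' else 0)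
        ≤ (if 1 ≤ k then ((a:ℝ)/k) * (2*(1+L)) else 0) := by
      intro k hk
      rcases Nat.eq_zero_or_pos k with rfl | hkpos
      · rw [if_neg (by omega)]
        apply le_of_eq
        apply Finset.sum_eq_zero
        intro k' _
        split
        · push_cast; rw [div_zero, zero_mul]
        · rfl
      · rw [if_pos (show 1 ≤ k from hkpos), ← Finset.sum_filter, ← Finset.mul_sum]
        exact mul_le_mul_of_nonneg_left (unitfiber a k hkpos) (by positivity)
    calc ∑ k ∈ Finset.range (a+1), ∑ k' ∈ Finset.range (a+1),
          (if k' ≤ k ∧ Nat.Coprime k k' then ((a:ℝ)/k) * x0inv a k k' else 0)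
        ≤ ∑ k ∈ Finset.range (a+1), (if 1 ≤ k then ((a:ℝ)/k) * (2*(1+L)) else 0) :=
          Finset.sum_le_sum hk_bound
      _ = ∑ k ∈ (Finset.range (a+1)).filter (1 ≤ ·), ((a:ℝ)/k) * (2*(1+L)) :=
          (Finset.sum_filter _ _).symm
      _ = ∑ k ∈ Finset.Icc 1 a, ((a:ℝ)/k) * (2*(1+L)) := by
          apply Finset.sum_congr _ (fun _ _ => rfl)
          ext k
          simp only [Finset.mem_filter, Finset.mem_range, Finset.mem_Icc]
          omega
      _ = (2*(1+L)*(a:ℝ)) * ∑ k ∈ Finset.Icc 1 a, (1:ℝ)/k := by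
          rw [Finset.mul_sum]
          apply Finset.sum_congr rfl
          intro k _
          rw [div_eq_mul_one_div]
          ring
      _ ≤ (2*(1+L)*(a:ℝ)) * (1+L) := by
          apply mul_le_mul_of_nonneg_left harm (by positivity)
      _ = 2*(a:ℝ)*(1+L)^2 := by ring
  -- Piece 2
  have hP2 : ∑ m ∈ (Finset.range (a+1)) ×ˢ (Finset.range (a+1)), G2 m.1 m.2
      ≤ 2*(a:ℝ)*(1+L)^2 := by
    rw [Finset.sum_product' (f := G2), Finset.sum_comm]
    simp only [hG2]
    have hk_bound : ∀ k ∈ Finset.range (a+1),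
        (∑ k' ∈ Finset.range (a+1),
          if k' ≤ k ∧ 1 ≤ k then ((a:ℝ)*(1+L))/(k^2) else 0)
        ≤ (if 1 ≤ k then 2*((a:ℝ)*(1+L))/k else 0) := by
      intro k hk
      rw [Finset.mem_range] at hk
      rcases Nat.eq_zero_or_pos k with rfl | hkpos
      · rw [if_neg (by omega)]
        apply le_of_eq
        apply Finset.sum_eq_zero
        intro k' _
        rw [if_neg (by omega)]
      · rw [if_pos (show 1 ≤ k from hkpos), ← Finset.sum_filter]
        have hfilter : (Finset.range (a+1)).filter (fun k' => k' ≤ k ∧ 1 ≤ k)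
            = Finset.range (k+1) := by
          ext k'
          simp only [Finset.mem_filter, Finset.mem_range]
          omega
        rw [hfilter, Finset.sum_const, Finset.card_range, nsmul_eq_mul]
        have hkr : (0:ℝ) < k := by exact_mod_cast hkpos
        have h2k : ((k:ℝ)+1) ≤ 2*k := by
          have : (1:ℝ) ≤ k := by exact_mod_cast hkpos
          linarith
        calc ((k+1:ℕ):ℝ) * ((a:ℝ)*(1+L)/(k:ℝ)^2)
            = ((k:ℝ)+1) * ((a:ℝ)*(1+L)/(k:ℝ)^2) := by push_cast; ring
          _ ≤ (2*(k:ℝ)) * ((a:ℝ)*(1+L)/(k:ℝ)^2) :=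
              mul_le_mul_of_nonneg_right h2k (by positivity)
          _ = 2*((a:ℝ)*(1+L))/k := by
              field_simp
    calc ∑ k ∈ Finset.range (a+1), ∑ k' ∈ Finset.range (a+1),
          (if k' ≤ k ∧ 1 ≤ k then ((a:ℝ)*(1+L))/(k^2) else 0)
        ≤ ∑ k ∈ Finset.range (a+1), (if 1 ≤ k then 2*((a:ℝ)*(1+L))/k else 0) :=
          Finset.sum_le_sum hk_bound
      _ = ∑ k ∈ (Finset.range (a+1)).filter (1 ≤ ·), 2*((a:ℝ)*(1+L))/k :=
          (Finset.sum_filter _ _).symm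
      _ = ∑ k ∈ Finset.Icc 1 a, 2*((a:ℝ)*(1+L))/k := by
          apply Finset.sum_congr _ (fun _ _ => rfl)
          ext k
          simp only [Finset.mem_filter, Finset.mem_range, Finset.mem_Icc]
          omega
      _ = (2*(1+L)*(a:ℝ)) * ∑ k ∈ Finset.Icc 1 a, (1:ℝ)/k := by
          rw [Finset.mul_sum]
          apply Finset.sum_congr rfl
          intro k _
          rw [div_eq_mul_one_div]
          ring
      _ ≤ (2*(1+L)*(a:ℝ)) * (1+L) := by
          apply mul_le_mul_of_nonneg_left harm (by positivity)
      _ = 2*(a:ℝ)*(1+L)^2 := by ring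
  -- combine
  calc ∑ q ∈ Dset a, (↑(q.2.2.2 / q.2.2.1) : ℝ)
      ≤ ∑ m ∈ (Finset.range (a+1)) ×ˢ (Finset.range (a+1)),
        ∑ q ∈ (Dset a).filter (fun q => (q.1, q.2.1) = m), (a:ℝ)/(q.2.1 * q.2.2.1) := hstep1
    _ ≤ ∑ m ∈ (Finset.range (a+1)) ×ˢ (Finset.range (a+1)), (G1 m.1 m.2 + G2 m.1 m.2) :=
        Finset.sum_le_sum hinner
    _ = (∑ m ∈ (Finset.range (a+1)) ×ˢ (Finset.range (a+1)), G1 m.1 m.2)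
        + ∑ m ∈ (Finset.range (a+1)) ×ˢ (Finset.range (a+1)), G2 m.1 m.2 :=
        Finset.sum_add_distrib
    _ ≤ 2*(a:ℝ)*(1+L)^2 + 2*(a:ℝ)*(1+L)^2 := add_le_add hP1 hP2
    _ = 4 * (a:ℝ) * (1+L)^2 := by ring

end SPQAux

theorem sum_partial_quotients_bound :
    ∃ C : ℝ, 0 < C ∧ ∀ a : ℕ, 2 ≤ a →
      ∑ l ∈ Finset.Icc 1 a, (contFracPartialQuotientSum l a : ℝ) ≤
        C * a * (Real.log a) ^ 2 := by
  refine ⟨125, by norm_num, ?_⟩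
  intro a ha
  have h1 : ∑ l ∈ Finset.Icc 1 a, (contFracPartialQuotientSum l a : ℝ)
      = ((∑ l ∈ Finset.Icc 1 a, contFracPartialQuotientSum l a : ℕ) : ℝ) := by
    rw [Nat.cast_sum]
  have h2 : ((∑ l ∈ Finset.Icc 1 a, contFracPartialQuotientSum l a : ℕ) : ℝ)
      ≤ 5 * ((∑ q ∈ Dset a, q.2.2.2 / q.2.2.1 : ℕ) : ℝ) := by
    have := main_count a
    have h5 : (∑ l ∈ Finset.Icc 1 a, contFracPartialQuotientSum l a : ℕ)
        ≤ 5 * (∑ q ∈ Dset a, q.2.2.2 / q.2.2.1 : ℕ) := this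
    exact_mod_cast h5
  have h3 := analytic a
  have hL : Real.log 2 ≤ Real.log a := by
    apply Real.log_le_log (by norm_num)
    exact_mod_cast ha
  have hl2 : (0.6931471803 : ℝ) < Real.log 2 := Real.log_two_gt_d9
  have hlog : 1 + Real.log a ≤ (5/2) * Real.log a := by linarith
  have hlogpos : 0 < Real.log a := by linarith
  have hsq : (1 + Real.log a)^2 ≤ (25/4) * (Real.log a)^2 := by nlinarith
  have hapos : (0:ℝ) ≤ (a:ℝ) := by positivity
  calc ∑ l ∈ Finset.Icc 1 a, (contFracPartialQuotientSum l a : ℝ)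
      ≤ 5 * ((∑ q ∈ Dset a, q.2.2.2 / q.2.2.1 : ℕ) : ℝ) := by rw [h1]; exact h2
    _ ≤ 5 * (4 * (a:ℝ) * (1 + Real.log a)^2) := by linarith
    _ = 20 * (a:ℝ) * (1 + Real.log a)^2 := by ring
    _ ≤ 20 * (a:ℝ) * ((25/4) * (Real.log a)^2) := by
        apply mul_le_mul_of_nonneg_left hsq (by positivity)
    _ = 125 * (a:ℝ) * (Real.log a)^2 := by ring
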